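/- Let G be a monoid acting on a field F by ring endomorphisms, k = F^G its fixed subfield, and k′ a subfield of F stable under G that is a Galois (algebraic, normal, separable) extension of k. Fix r ≥ 1 and suppose that for every element a ∈ F ∖ k′ the k′-subspace of F spanned by the orbit {σ(a) : σ ∈ G} has dimension > r² over k′. If a, a′ : G → GL_r(k′) are 1-cocycles and b ∈ GL_r(F) satisfies b·a_σ = a′_σ·σ(b) for all σ ∈ G, then b ∈ GL_r(k′); in particular, the natural map H^1(G, GL_r(k′)) → H^1(G, GL_r(F)) is injective. -/
import Mathlib


/-- **Injectivity of `H¹(G, GLᵣ k') → H¹(G, GLᵣ F)`.**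
Let a monoid `G` act on a field `F` by ring endomorphisms, let `k = Fᴳ` be the fixed
subfield and `k'` a `G`-stable subfield of `F` which is a Galois extension of `k`.
Assume that for every `a ∈ F ∖ k'` the `k'`-span of the `G`-orbit of `a` has dimension
`> r²` (equivalently, the orbit contains `r² + 1` elements linearly independent over `k'`).
If `a, a'` are `1`-cocycles of `G` with values in `GLᵣ(k')` and `b ∈ GLᵣ(F)` satisfies
`b ⬝ aₛ = a'ₛ ⬝ σ(b)` for all `σ ∈ G`, then all entries of `b` lie in `k'`
(so the two cocycles are already cohomologous over `k'`). -/
theorem entries_mem_of_cocycles_cohomologous_over_big_field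
    (G F : Type*) [Monoid G] [Field F] [MulSemiringAction G F]
    (k' : Subfield F)
    (hstab : ∀ (σ : G) (a : F), a ∈ k' → σ • a ∈ k')
    (hkk' : FixedPoints.subfield G F ≤ k')
    (hGal : @IsGalois (FixedPoints.subfield G F) _ k' _
      (RingHom.toAlgebra (Subfield.inclusion hkk')))
    (r : ℕ) (hr : 1 ≤ r)
    (horbit : ∀ c : F, c ∉ k' → ∃ y : Fin (r ^ 2 + 1) → G,
      ∀ cf : Fin (r ^ 2 + 1) → F, (∀ i, cf i ∈ k') →
        (∑ i, cf i * (y i • c)) = 0 → ∀ i, cf i = 0)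
    (a a' : G → Matrix (Fin r) (Fin r) F)
    (ha : ∀ σ, IsUnit (a σ)) (ha' : ∀ σ, IsUnit (a' σ))
    (hak' : ∀ σ i j, a σ i j ∈ k') (ha'k' : ∀ σ i j, a' σ i j ∈ k')
    (hca : ∀ σ τ : G, a (σ * τ) = a σ * (a τ).map (σ • ·))
    (hca' : ∀ σ τ : G, a' (σ * τ) = a' σ * (a' τ).map (σ • ·))
    (b : Matrix (Fin r) (Fin r) F) (hb : IsUnit b)
    (hcoh : ∀ σ : G, b * a σ = a' σ * b.map (σ • ·)) :
    ∀ i j, b i j ∈ k' := by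
  intro i j
  by_contra hc
  obtain ⟨y, hy⟩ := horbit (b i j) hc
  set w : Fin r × Fin r → F := fun pq => b pq.1 pq.2 with hw
  set W := Submodule.span k' (Set.range w) with hW
  have hmem : ∀ (σ : G) (p q : Fin r), σ • b p q ∈ W := by
    intro σ p q
    set A' : Matrix (Fin r) (Fin r) k' := fun s t => ⟨a' σ s t, ha'k' σ s t⟩ with hA'
    have hmap : A'.map (k'.subtype) = a' σ := by ext s t; rfl
    have hdetu : IsUnit A'.det := by
      rw [isUnit_iff_ne_zero]
      intro h0
      have h1 : k'.subtype A'.det = (a' σ).det := by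
        rw [RingHom.map_det, RingHom.mapMatrix_apply, hmap]
      have h2 : (a' σ).det ≠ 0 := ((Matrix.isUnit_iff_isUnit_det _).mp (ha' σ)).ne_zero
      rw [h0, map_zero] at h1
      exact h2 h1.symm
    have hinv : (A'⁻¹.map k'.subtype) * a' σ = 1 := by
      rw [← hmap, ← Matrix.map_mul, Matrix.nonsing_inv_mul _ hdetu, Matrix.map_one _ (map_zero _) (map_one _)]
    have hb' : b.map (σ • ·) = (A'⁻¹.map k'.subtype) * b * a σ := by
      calc b.map (σ • ·) = 1 * b.map (σ • ·) := (one_mul _).symm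
        _ = ((A'⁻¹.map k'.subtype) * a' σ) * b.map (σ • ·) := by rw [hinv]
        _ = (A'⁻¹.map k'.subtype) * (a' σ * b.map (σ • ·)) := by rw [mul_assoc]
        _ = (A'⁻¹.map k'.subtype) * (b * a σ) := by rw [← hcoh σ]
        _ = (A'⁻¹.map k'.subtype) * b * a σ := by rw [mul_assoc]
    have hbe : σ • b p q = ∑ z, ∑ x, k'.subtype (A'⁻¹ p x) * b x z * a σ z q := by
      have := congrArg (fun M => M p q) hb'
      simpa [Matrix.map_apply, Matrix.mul_apply, Finset.sum_mul] using this
    rw [hbe]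
    refine Submodule.sum_mem _ (fun z _ => Submodule.sum_mem _ (fun x _ => ?_))
    have key : k'.subtype (A'⁻¹ p x) * b x z * a σ z q
        = (A'⁻¹ p x * (⟨a σ z q, hak' σ z q⟩ : k')) • w (x, z) := by
      show _ = ((A'⁻¹ p x * (⟨a σ z q, hak' σ z q⟩ : k') : k') : F) * w (x, z)
      push_cast
      simp only [hw, Subfield.coe_subtype]
      ring
    rw [key]
    exact Submodule.smul_mem _ _ (Submodule.subset_span (Set.mem_range_self (x, z)))
  have hli : LinearIndependent k' (fun t : Fin (r ^ 2 + 1) => y t • b i j) := by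
    rw [Fintype.linearIndependent_iff]
    intro g hg t
    have := hy (fun t => (g t : F)) (fun t => (g t).2) ?_ t
    · exact_mod_cast this
    · rw [← hg]
      exact Finset.sum_congr rfl (fun t _ => rfl)
  have hli' : LinearIndependent k'
      (fun t : Fin (r ^ 2 + 1) => (⟨y t • b i j, hmem (y t) i j⟩ : W)) :=
    hli.of_comp W.subtype
  haveI : FiniteDimensional k' W := FiniteDimensional.span_of_finite k' (Set.finite_range w)
  have h1 := hli'.fintype_card_le_finrank
  have h2 : Module.finrank k' W ≤ Fintype.card (Fin r × Fin r) := finrank_range_le_card w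
  simp [Fintype.card_fin, pow_two] at h1 h2
  omega
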